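/- Let χ be a Dirichlet character of conductor f, N ≥ 1, S_m(x) = Σ_{a=1}^{f} χ(a)(x+a)^m, and define T̃_r(k) = (-N!)^r · Σ_{i_1+⋯+i_r = k, i_j ≥ 0} 1/((N+i_1)!···(N+i_r)!) with T̃_0(0) = 1 and T̃_0(k) = 0 for k ≥ 1. Then for n ≥ 1: B_{N,n,χ}(x) = Σ_{k=0}^{n} (k!/f^{N-k}) · binomial(n,k) · Σ_{r=0}^{k} binomial(k+1, r+1) · T̃_r(k) · S_{n-k}(x). -/

import Mathlib

open PowerSeries Finset

noncomputable def eSer (c : ℂ) : PowerSeries ℂ := PowerSeries.mk fun n => c ^ n / n.factorial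

noncomputable def dSer (N f : ℕ) : PowerSeries ℂ :=
  PowerSeries.mk fun m => (N.factorial : ℂ) * (f : ℂ) ^ m / (N + m).factorial

noncomputable def hB (N n : ℕ) : ℂ :=
  n.factorial * PowerSeries.coeff n (dSer N 1)⁻¹

noncomputable def hBP (N n : ℕ) (x : ℂ) : ℂ :=
  n.factorial * PowerSeries.coeff n (eSer x * (dSer N 1)⁻¹)



lemma coeff_pow_tuple (φ : PowerSeries ℂ) (r k : ℕ) :
    PowerSeries.coeff k (φ ^ r) =
      ∑ i ∈ Finset.Nat.antidiagonalTuple r k, ∏ j, PowerSeries.coeff (i j) φ := by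
  induction r generalizing k with
  | zero =>
    cases k with
    | zero => simp
    | succ k => simp [PowerSeries.coeff_one]
  | succ r ih =>
    rw [pow_succ', PowerSeries.coeff_mul]
    simp_rw [ih, Finset.mul_sum]
    rw [show (∑ x ∈ antidiagonal k, ∑ i ∈ Finset.Nat.antidiagonalTuple r x.2,
        (PowerSeries.coeff x.1) φ * ∏ j : Fin r, (PowerSeries.coeff (i j)) φ)
      = ∑ p ∈ (antidiagonal k).sigma (fun x => Finset.Nat.antidiagonalTuple r x.2),
        (PowerSeries.coeff p.1.1) φ * ∏ j : Fin r, (PowerSeries.coeff (p.2 j)) φ by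
      rw [Finset.sum_sigma]]
    refine Finset.sum_bij (fun p _ => Fin.cons p.1.1 p.2) ?_ ?_ ?_ ?_
    · rintro ⟨⟨a, b⟩, i⟩ hp
      simp only [Finset.mem_sigma, Finset.mem_antidiagonal,
        Nat.mem_antidiagonalTuple] at hp ⊢
      rw [Fin.sum_cons, hp.2]
      exact Finset.HasAntidiagonal.mem_antidiagonal.mp hp.1
    · rintro ⟨⟨a, b⟩, i⟩ hp ⟨⟨a', b'⟩, i'⟩ hp' h
      simp only [Finset.mem_sigma, Finset.mem_antidiagonal,
        Nat.mem_antidiagonalTuple] at hp hp'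
      have h0 : a = a' := by
        have := congrFun h 0
        simpa using this
      have ht : i = i' := by
        funext j
        have := congrFun h j.succ
        simpa using this
      have hb : b = b' := by rw [← hp.2, ← hp'.2, ht]
      subst h0 hb ht; rfl
    · intro i hi
      simp only [Nat.mem_antidiagonalTuple] at hi
      refine ⟨⟨⟨i 0, ∑ j, Fin.tail i j⟩, Fin.tail i⟩, ?_, ?_⟩
      · simp only [Finset.mem_sigma, Finset.mem_antidiagonal,
          Nat.mem_antidiagonalTuple]
        refine ⟨?_, trivial⟩
        rw [← hi, Fin.sum_univ_succ]
        exact Finset.HasAntidiagonal.mem_antidiagonal.mpr rfl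
      · exact Fin.cons_self_tail i
    · rintro ⟨⟨a, b⟩, i⟩ hp
      simp [Fin.prod_univ_succ]


lemma dSer_const (N f : ℕ) : PowerSeries.constantCoeff (dSer N f) = 1 := by
  simp [dSer, PowerSeries.constantCoeff_mk, Nat.factorial_ne_zero,
    div_self, mul_comm]

lemma coeff_inv_aux (N f k : ℕ) :
    PowerSeries.coeff k (dSer N f)⁻¹ =
      ∑ r ∈ Finset.range (k + 1), ((k + 1).choose (r + 1) : ℂ) * (-1) ^ r *
        PowerSeries.coeff k ((dSer N f) ^ r) := by
  set D := dSer N f with hDdef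
  have h0 : PowerSeries.constantCoeff D = 1 := dSer_const N f
  have h0' : PowerSeries.constantCoeff D ≠ 0 := by rw [h0]; exact one_ne_zero
  set G : PowerSeries ℂ :=
    ∑ r ∈ Finset.range (k + 1),
      PowerSeries.C (((k + 1).choose (r + 1) : ℂ) * (-1) ^ r) * D ^ r with hGdef
  have hDG : D * G = 1 - (1 - D) ^ (k + 1) := by
    have hpow : (1 - D) ^ (k + 1)
        = ∑ m ∈ Finset.range (k + 2), (-D) ^ m * 1 ^ (k + 1 - m) * ((k + 1).choose m) := by
      rw [sub_eq_add_neg, add_comm]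
      exact add_pow (-D) 1 (k + 1)
    rw [hpow, Finset.sum_range_succ']
    rw [hGdef, Finset.mul_sum]
    simp only [pow_zero, one_pow, mul_one, one_mul, Nat.choose_zero_right, Nat.cast_one]
    rw [show ∀ S : ℂ⟦X⟧, 1 - (S + 1) = -S from fun S => by ring, ← Finset.sum_neg_distrib]
    refine Finset.sum_congr rfl fun r _ => ?_
    have : (PowerSeries.C) (((k + 1).choose (r + 1) : ℂ) * (-1) ^ r)
        = (((k + 1).choose (r + 1) : ℂ⟦X⟧)) * (-1) ^ r := by
      rw [map_mul, map_pow, map_neg, map_one, map_natCast]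
    rw [this]
    ring
  have hkey : (D⁻¹ : ℂ⟦X⟧) = G + D⁻¹ * (1 - D) ^ (k + 1) := by
    calc D⁻¹ = D⁻¹ * (D * G + (1 - D) ^ (k + 1)) := by
              rw [hDG, sub_add_cancel, mul_one]
      _ = (D⁻¹ * D) * G + D⁻¹ * (1 - D) ^ (k + 1) := by ring
      _ = G + D⁻¹ * (1 - D) ^ (k + 1) := by
              rw [PowerSeries.inv_mul_cancel _ h0', one_mul]
  have hvanish : PowerSeries.coeff k (D⁻¹ * (1 - D) ^ (k + 1)) = 0 := by
    have hX : (PowerSeries.X : ℂ⟦X⟧) ∣ (1 - D) := by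
      rw [PowerSeries.X_dvd_iff]
      simp [h0]
    have hdvd : (PowerSeries.X : ℂ⟦X⟧) ^ (k + 1) ∣ D⁻¹ * (1 - D) ^ (k + 1) :=
      Dvd.dvd.mul_left (pow_dvd_pow_of_dvd hX (k + 1)) _
    exact PowerSeries.X_pow_dvd_iff.mp hdvd k (Nat.lt_succ_self k)
  rw [hkey, map_add, hvanish, add_zero, hGdef, map_sum]
  refine Finset.sum_congr rfl fun r _ => ?_
  rw [PowerSeries.coeff_C_mul]

lemma coeff_dSer_pow (N f r k : ℕ) :
    PowerSeries.coeff k ((dSer N f) ^ r) =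
      (N.factorial : ℂ) ^ r * (f : ℂ) ^ k *
        ∑ i ∈ Finset.Nat.antidiagonalTuple r k, ∏ j, ((N + i j).factorial : ℂ)⁻¹ := by
  rw [coeff_pow_tuple, Finset.mul_sum]
  refine Finset.sum_congr rfl fun i hi => ?_
  rw [Finset.Nat.mem_antidiagonalTuple] at hi
  have hc : ∀ j : Fin r, PowerSeries.coeff (i j) (dSer N f)
      = (N.factorial : ℂ) * (f : ℂ) ^ (i j) * ((N + i j).factorial : ℂ)⁻¹ := by
    intro j
    simp [dSer, div_eq_mul_inv]
  simp_rw [hc]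
  rw [Finset.prod_mul_distrib, Finset.prod_mul_distrib, Finset.prod_const,
    Finset.prod_pow_eq_pow_sum, hi]
  simp [Fintype.card_fin]

lemma coeff_inv_dSer (N f k : ℕ) :
    PowerSeries.coeff k (dSer N f)⁻¹ =
      (f : ℂ) ^ k * ∑ r ∈ Finset.range (k + 1),
        ((k + 1).choose (r + 1) : ℂ) * ((-(N.factorial : ℂ)) ^ r *
          ∑ i ∈ Finset.Nat.antidiagonalTuple r k, ∏ j, ((N + i j).factorial : ℂ)⁻¹) := by
  rw [coeff_inv_aux, Finset.mul_sum]
  refine Finset.sum_congr rfl fun r _ => ?_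
  rw [coeff_dSer_pow, neg_pow]
  ring

noncomputable def gBP (N f : ℕ) (χ : DirichletCharacter ℂ f) (n : ℕ) (x : ℂ) : ℂ :=
  n.factorial * PowerSeries.coeff n
    (((f : ℂ) ^ N)⁻¹ • ((∑ a ∈ Finset.Icc 1 f, (PowerSeries.C (χ (a : ZMod f))) * eSer (x + a)) * (dSer N f)⁻¹))



noncomputable def gB (N f : ℕ) (χ : DirichletCharacter ℂ f) (n : ℕ) : ℂ := gBP N f χ n 0

theorem stmt15 (N f : ℕ) (hN : 1 ≤ N) (hf : 0 < f) (χ : DirichletCharacter ℂ f)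
    (hχ : χ.IsPrimitive) (n : ℕ) (hn : 1 ≤ n) (x : ℂ) :
    gBP N f χ n x = ∑ k ∈ Finset.range (n + 1),
      (k.factorial : ℂ) / (f : ℂ) ^ ((N : ℤ) - (k : ℤ)) * (n.choose k : ℂ) *
      (∑ r ∈ Finset.range (k + 1),
        ((k + 1).choose (r + 1) : ℂ) * ((-(N.factorial : ℂ)) ^ r *
          ∑ i ∈ Finset.Nat.antidiagonalTuple r k, ∏ j, ((N + i j).factorial : ℂ)⁻¹)) *
      (∑ a ∈ Finset.Icc 1 f, χ (a : ZMod f) * (x + (a : ℂ)) ^ (n - k)) := by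
  have hf0 : (f : ℂ) ≠ 0 := Nat.cast_ne_zero.mpr hf.ne'
  rw [gBP, map_smul, smul_eq_mul,
    mul_comm (∑ a ∈ Finset.Icc 1 f, (PowerSeries.C (χ (a : ZMod f))) * eSer (x + a)) (dSer N f)⁻¹,
    PowerSeries.coeff_mul, Finset.Nat.sum_antidiagonal_eq_sum_range_succ_mk]
  simp_rw [coeff_inv_dSer, map_sum, PowerSeries.coeff_C_mul, eSer, PowerSeries.coeff_mk]
  rw [Finset.mul_sum, Finset.mul_sum]
  refine Finset.sum_congr rfl fun k hk => ?_
  have hk' : k ≤ n := Nat.lt_succ_iff.mp (Finset.mem_range.mp hk)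
  have hfac : ((n.choose k : ℂ)) * (k.factorial : ℂ) * ((n - k).factorial : ℂ) = (n.factorial : ℂ) := by
    exact_mod_cast congrArg (Nat.cast (R := ℂ)) (Nat.choose_mul_factorial_mul_factorial hk')
  have hz : (f : ℂ) ^ ((N : ℤ) - (k : ℤ)) = (f : ℂ) ^ N * ((f : ℂ) ^ k)⁻¹ := by
    rw [zpow_sub₀ hf0, zpow_natCast, zpow_natCast, div_eq_mul_inv]
  rw [hz]
  have hnk : ((n - k).factorial : ℂ) ≠ 0 := Nat.cast_ne_zero.mpr (Nat.factorial_ne_zero _)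
  simp_rw [div_eq_mul_inv]
  have hsum : (∑ a ∈ Finset.Icc 1 f,
        (χ (a : ZMod f)) * ((x + (a : ℂ)) ^ (n - k) * (((n - k).factorial : ℂ))⁻¹))
      = (∑ a ∈ Finset.Icc 1 f, χ (a : ZMod f) * (x + (a : ℂ)) ^ (n - k)) *
          (((n - k).factorial : ℂ))⁻¹ := by
    rw [Finset.sum_mul]
    refine Finset.sum_congr rfl fun a _ => by ring
  rw [hsum]
  have h3 : ((f : ℂ) ^ N * ((f : ℂ) ^ k)⁻¹)⁻¹ = (f : ℂ) ^ k * ((f : ℂ) ^ N)⁻¹ := by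
    rw [mul_inv, inv_inv, mul_comm]
  rw [h3]
  have h4 : (n.factorial : ℂ) * ((n - k).factorial : ℂ)⁻¹
      = (k.factorial : ℂ) * (n.choose k : ℂ) := by
    rw [mul_inv_eq_iff_eq_mul₀ hnk]
    linear_combination -hfac
  set T := ∑ r ∈ Finset.range (k + 1),
      ((k + 1).choose (r + 1) : ℂ) * ((-(N.factorial : ℂ)) ^ r *
        ∑ i ∈ Finset.Nat.antidiagonalTuple r k, ∏ j, ((N + i j).factorial : ℂ)⁻¹) with hT
  set S := ∑ a ∈ Finset.Icc 1 f, χ (a : ZMod f) * (x + (a : ℂ)) ^ (n - k) with hS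
  linear_combination ((f : ℂ) ^ N)⁻¹ * (f : ℂ) ^ k * T * S * h4
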